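/- arXiv:1208.2112 — 2 statements merged into one kernel-verified Lean document; each statement's English description precedes it below -/
import Mathlib

section
/- Policy improvement: let P and P' be real n×n row-stochastic matrices, γ ∈ [0,1), and r ∈ ℝⁿ. Let v = (I − γP)⁻¹ r. If r + γ P' v ≥ v componentwise, then (I − γP')⁻¹ r ≥ v componentwise. -/
open Matrix

lemma stoch_aux {n : ℕ} (M : Matrix (Fin n) (Fin n) ℝ)
    (hM : ∀ i j, 0 ≤ M i j) (hrow : ∀ i, ∑ j, M i j = 1)
    {γ : ℝ} (hγ0 : 0 ≤ γ) (hγ1 : γ < 1)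
    (u : Fin n → ℝ) (h : γ • M.mulVec u ≤ u) : 0 ≤ u := by
  intro i
  obtain ⟨k, -, hk⟩ := Finset.exists_min_image Finset.univ u ⟨i, Finset.mem_univ i⟩
  have hMu : u k ≤ M.mulVec u k := by
    have h0 : u k = ∑ j, M k j * u k := by
      rw [← Finset.sum_mul, hrow, one_mul]
    rw [h0, Matrix.mulVec, dotProduct]
    exact Finset.sum_le_sum fun j _ =>
      mul_le_mul_of_nonneg_left (hk j (Finset.mem_univ j)) (hM k j)
  have h2 : γ * M.mulVec u k ≤ u k := h k
  have h3 : γ * u k ≤ u k := le_trans (mul_le_mul_of_nonneg_left hMu hγ0) h2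
  have h4 : 0 ≤ u k := by nlinarith
  exact le_trans h4 (hk i (Finset.mem_univ i))

lemma stoch_unit {n : ℕ} (M : Matrix (Fin n) (Fin n) ℝ)
    (hM : ∀ i j, 0 ≤ M i j) (hrow : ∀ i, ∑ j, M i j = 1)
    {γ : ℝ} (hγ0 : 0 ≤ γ) (hγ1 : γ < 1) :
    IsUnit (1 - γ • M) := by
  rw [← Matrix.mulVec_injective_iff_isUnit]
  have key : ∀ z : Fin n → ℝ, (1 - γ • M).mulVec z = 0 → z = 0 := by
    intro z hz
    rw [Matrix.sub_mulVec, Matrix.one_mulVec, Matrix.smul_mulVec,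
      sub_eq_zero] at hz
    have h1 : (0 : Fin n → ℝ) ≤ z :=
      stoch_aux M hM hrow hγ0 hγ1 z (le_of_eq hz.symm)
    have h2 : (0 : Fin n → ℝ) ≤ -z := by
      refine stoch_aux M hM hrow hγ0 hγ1 (-z) (le_of_eq ?_)
      rw [Matrix.mulVec_neg, smul_neg, ← hz]
    ext i
    have := h1 i
    have := h2 i
    simp only [Pi.neg_apply, Pi.zero_apply] at *
    linarith
  intro x y hxy
  have : (1 - γ • M).mulVec (x - y) = 0 := by
    rw [Matrix.mulVec_sub, hxy, sub_self]
  have := key _ this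
  exact sub_eq_zero.mp this

/-- Policy improvement: if `v = (I − γP)⁻¹ r` is the value of a policy with transition
matrix `P`, and another policy with transition matrix `P'` is greedy-improving, i.e.
`r + γ P' v ≥ v` componentwise, then its value dominates: `(I − γP')⁻¹ r ≥ v`. -/
theorem policy_improvement
    {n : ℕ} (P P' : Matrix (Fin n) (Fin n) ℝ)
    (hP_nonneg : ∀ i j, 0 ≤ P i j) (hP_row : ∀ i, ∑ j, P i j = 1)
    (hP'_nonneg : ∀ i j, 0 ≤ P' i j) (hP'_row : ∀ i, ∑ j, P' i j = 1)
    (γ : ℝ) (hγ0 : 0 ≤ γ) (hγ1 : γ < 1) (r : Fin n → ℝ)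
    (v : Fin n → ℝ) (hv : v = (1 - γ • P)⁻¹.mulVec r)
    (himp : v ≤ r + γ • P'.mulVec v) :
    v ≤ (1 - γ • P')⁻¹.mulVec r := by
  set w := (1 - γ • P')⁻¹.mulVec r with hw
  have hunit : IsUnit (1 - γ • P') := stoch_unit P' hP'_nonneg hP'_row hγ0 hγ1
  have hfix : (1 - γ • P').mulVec w = r := by
    rw [hw, Matrix.mulVec_mulVec, Matrix.mul_nonsing_inv _
      ((Matrix.isUnit_iff_isUnit_det _).mp hunit), Matrix.one_mulVec]
  have hwr : w = r + γ • P'.mulVec w := by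
    rw [Matrix.sub_mulVec, Matrix.one_mulVec, Matrix.smul_mulVec] at hfix
    rw [← hfix]; ring_nf
  have hkey : γ • P'.mulVec (w - v) ≤ w - v := by
    intro i
    have h1 := himp i
    have : w i = r i + γ * P'.mulVec w i := congrFun hwr i
    simp only [Pi.smul_apply, Pi.sub_apply, Pi.add_apply, smul_eq_mul,
      Matrix.mulVec_sub] at *
    linarith
  have := stoch_aux P' hP'_nonneg hP'_row hγ0 hγ1 (w - v) hkey
  intro i
  have := this i
  simp only [Pi.sub_apply, Pi.zero_apply] at this
  linarith
end

section
/- Equivalence of evidence from decision mappings and decision trajectories: let S and A be types, let t ≥ 1, and let s : {1,…,t} → S and a : {1,…,t} → A be observed states and actions. Let ps : S → ℝ, pt : S → A → S → ℝ, and, for an arbitrary type R of reward parameters, q : S → A → R → ℝ. Define L₁(r) = ∏_{h=1}^{t} ps(s_h) · q(s_h, a_h, r) and L₂(r) = ps(s_1) · q(s_1, a_1, r) · ∏_{h=2}^{t} pt(s_{h-1}, a_{h-1}, s_h) · q(s_h, a_h, r). If ps(s_h) > 0 for all h and pt(s_{h-1}, a_{h-1}, s_h) > 0 for all h ≥ 2,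 then there exists a constant c > 0, not depending on r, such that L₁(r) = c · L₂(r) for all r ∈ R. -/
/-- Equivalence of evidence between the decision-mapping experiment (likelihood `L₁`)
and the decision-trajectory experiment (likelihood `L₂`): if all state marginals and
Markov transition probabilities appearing in the trajectory are positive, then
`L₁(r) = c · L₂(r)` for a constant `c > 0` not depending on the reward parameter `r`. -/
theorem decision_mapping_trajectory_evidence_equivalence
    {S A R : Type*} (t : ℕ) (ht : 1 ≤ t)
    (s : ℕ → S) (a : ℕ → A)
    (ps : S → ℝ) (pt : S → A → S → ℝ) (q : S → A → R → ℝ)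
    (hps : ∀ h ∈ Finset.Icc 1 t, 0 < ps (s h))
    (hpt : ∀ h ∈ Finset.Icc 2 t, 0 < pt (s (h - 1)) (a (h - 1)) (s h)) :
    ∃ c : ℝ, 0 < c ∧ ∀ r : R,
      (∏ h ∈ Finset.Icc 1 t, ps (s h) * q (s h) (a h) r) =
        c * (ps (s 1) * q (s 1) (a 1) r *
          ∏ h ∈ Finset.Icc 2 t, pt (s (h - 1)) (a (h - 1)) (s h) * q (s h) (a h) r) := by
  have hP : 0 < ∏ h ∈ Finset.Icc 2 t, ps (s h) :=
    Finset.prod_pos fun h hh => hps h (Finset.mem_Icc.mpr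
      ⟨le_trans one_le_two (Finset.mem_Icc.mp hh).1, (Finset.mem_Icc.mp hh).2⟩)
  have hT : 0 < ∏ h ∈ Finset.Icc 2 t, pt (s (h - 1)) (a (h - 1)) (s h) :=
    Finset.prod_pos hpt
  refine ⟨(∏ h ∈ Finset.Icc 2 t, ps (s h)) /
      (∏ h ∈ Finset.Icc 2 t, pt (s (h - 1)) (a (h - 1)) (s h)), div_pos hP hT, fun r => ?_⟩
  have hins : Finset.Icc 1 t = insert 1 (Finset.Icc 2 t) := by
    ext x
    simp only [Finset.mem_Icc, Finset.mem_insert]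
    omega
  rw [hins, Finset.prod_insert (by simp), Finset.prod_mul_distrib, Finset.prod_mul_distrib]
  field_simp
end
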